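/- Mixed-norm additive approximation: for integers p, r ≥ 1, ε > 0, δ = ε/(p+r), and (x₀, y) ∈ ℝ_{≥0} × ℝ^d_{≥0}, define Ψ_{p,r}(x₀,y) = (1/δ)·(((1+δx₀)^r + ‖1_d + δy‖_p^r)^{1/r} − 1). Then ‖(x₀,y)‖_{p,r} ≤ Ψ_{p,r}(x₀,y) ≤ ‖(x₀,y)‖_{p,r} + ((p+r)/ε)·‖1_d‖_p, where ‖(x₀,y)‖_{p,r} := ‖(x₀, ‖y‖_p)‖_r = (x₀^r + ‖y‖_p^r)^{1/r}. -/

import Mathlib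

open Finset Real

/-- The ℓ_p norm of a vector in ℝ^d, for a natural exponent p. -/
noncomputable def lpNorm (d p : ℕ) (x : Fin d → ℝ) : ℝ :=
  (∑ j, |x j| ^ p) ^ ((1 : ℝ) / p)

/-- The mixed (p,r) norm of (x₀, y) ∈ ℝ × ℝ^d: ‖(x₀, ‖y‖_p)‖_r. -/
noncomputable def mixedNorm (d p r : ℕ) (x0 : ℝ) (y : Fin d → ℝ) : ℝ :=
  (|x0| ^ r + (lpNorm d p y) ^ r) ^ ((1 : ℝ) / r)

/-- Mixed-norm smooth approximation. -/
noncomputable def PsiMixed (d p r : ℕ) (δ : ℝ) (x0 : ℝ) (y : Fin d → ℝ) : ℝ :=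
  (1 / δ) * (((1 + δ * x0) ^ r
      + (lpNorm d p (fun j => 1 + δ * y j)) ^ r) ^ ((1 : ℝ) / r) - 1)

private lemma rpow_pow_nat {x : ℝ} (hx : 0 ≤ x) {n : ℕ} (hn : n ≠ 0) :
    (x ^ n) ^ ((1 : ℝ) / n) = x := by
  rw [one_div]; exact Real.pow_rpow_inv_natCast hx hn

private lemma scale_rpow {c : ℝ} (hc : 0 ≤ c) {q : ℕ} (hq : q ≠ 0) {T : ℝ} (hT : 0 ≤ T) :
    (c ^ q * T) ^ ((1 : ℝ) / q) = c * T ^ ((1 : ℝ) / q) := by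
  rw [Real.mul_rpow (pow_nonneg hc q) hT, rpow_pow_nat hc hq]

private lemma key_sum {ι : Type*} (s : Finset ι) (hs : s.Nonempty) {q : ℕ} (hq : q ≠ 0)
    (u : ι → ℝ) (hu : ∀ i ∈ s, 0 ≤ u i) :
    (1 + (∑ i ∈ s, u i ^ q) ^ ((1 : ℝ) / q)) ^ q ≤ ∑ i ∈ s, (1 + u i) ^ q := by
  have hT0 : 0 ≤ ∑ i ∈ s, u i ^ q := Finset.sum_nonneg fun i hi => pow_nonneg (hu i hi) q
  rcases eq_or_lt_of_le hT0 with h0 | hpos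
  · have hall : ∀ i ∈ s, u i = 0 := by
      intro i hi
      have h := (Finset.sum_eq_zero_iff_of_nonneg
        (fun j hj => pow_nonneg (hu j hj) q)).1 h0.symm i hi
      exact (pow_eq_zero_iff hq).1 h
    have hsum : ∑ i ∈ s, (1 + u i) ^ q = (s.card : ℝ) := by
      rw [Finset.sum_congr rfl fun i hi => by rw [hall i hi, add_zero, one_pow]]
      simp
    rw [← h0, Real.zero_rpow (by positivity), add_zero, one_pow, hsum]
    exact_mod_cast hs.card_pos
  · set T := ∑ i ∈ s, u i ^ q with hTdef
    set S := T ^ ((1 : ℝ) / q) with hSdef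
    have hS0 : 0 < S := Real.rpow_pos_of_pos hpos _
    have hSq : S ^ q = T := by
      rw [hSdef, one_div]; exact Real.rpow_inv_natCast_pow hT0 hq
    have hui : ∀ i ∈ s, u i ≤ S := by
      intro i hi
      refine le_of_pow_le_pow_left₀ hq hS0.le ?_
      rw [hSq]
      exact Finset.single_le_sum (fun j hj => pow_nonneg (hu j hj) q) hi
    have hc : S * (1 + 1 / S) = 1 + S := by field_simp; ring
    calc (1 + S) ^ q = T * (1 + 1 / S) ^ q := by rw [← hc, mul_pow, hSq]
      _ = ∑ i ∈ s, (u i * (1 + 1 / S)) ^ q := by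
          rw [hTdef, Finset.sum_mul]
          exact Finset.sum_congr rfl fun i hi => (mul_pow _ _ _).symm
      _ ≤ ∑ i ∈ s, (1 + u i) ^ q := by
          refine Finset.sum_le_sum fun i hi => pow_le_pow_left₀
            (mul_nonneg (hu i hi) (by positivity)) ?_ q
          have h1 : u i / S ≤ 1 := (div_le_one hS0).2 (hui i hi)
          have h2 : u i * (1 + 1 / S) = u i + u i / S := by ring
          linarith

private lemma key_rpow {ι : Type*} (s : Finset ι) (hs : s.Nonempty) {q : ℕ} (hq : q ≠ 0)
    (u : ι → ℝ) (hu : ∀ i ∈ s, 0 ≤ u i) :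
    1 + (∑ i ∈ s, u i ^ q) ^ ((1 : ℝ) / q) ≤ (∑ i ∈ s, (1 + u i) ^ q) ^ ((1 : ℝ) / q) := by
  have h := key_sum s hs hq u hu
  have hT0 : 0 ≤ ∑ i ∈ s, u i ^ q := Finset.sum_nonneg fun i hi => pow_nonneg (hu i hi) q
  have h1 : (0:ℝ) ≤ 1 + (∑ i ∈ s, u i ^ q) ^ ((1 : ℝ) / q) := by
    have := Real.rpow_nonneg hT0 ((1:ℝ)/q)
    linarith
  calc 1 + (∑ i ∈ s, u i ^ q) ^ ((1 : ℝ) / q)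
      = ((1 + (∑ i ∈ s, u i ^ q) ^ ((1 : ℝ) / q)) ^ q) ^ ((1 : ℝ) / q) :=
        (rpow_pow_nat h1 hq).symm
    _ ≤ (∑ i ∈ s, (1 + u i) ^ q) ^ ((1 : ℝ) / q) :=
        Real.rpow_le_rpow (pow_nonneg h1 q) h (by positivity)

/-- Mixed-norm additive approximation: for integers p, r ≥ 1, ε > 0 and
δ = ε/(p+r), and (x₀, y) nonnegative,
‖(x₀,y)‖_{p,r} ≤ Ψ_{p,r}(x₀,y) ≤ ‖(x₀,y)‖_{p,r} + ((p+r)/ε)·‖1_d‖_p. -/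
theorem psi_mixed_additive_approximation
    (d p r : ℕ) (hd : 1 ≤ d) (hp : 1 ≤ p) (hr : 1 ≤ r)
    (ε δ : ℝ) (hε : 0 < ε) (hδ : δ = ε / (p + r))
    (x0 : ℝ) (hx0 : 0 ≤ x0) (y : Fin d → ℝ) (hy : ∀ j, 0 ≤ y j) :
    mixedNorm d p r x0 y ≤ PsiMixed d p r δ x0 y ∧
      PsiMixed d p r δ x0 y
        ≤ mixedNorm d p r x0 y + (((p : ℝ) + r) / ε) * lpNorm d p (fun _ => 1) := by
  have hp0 : p ≠ 0 := by omega
  have hr0 : r ≠ 0 := by omega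
  have hpr : (0:ℝ) < (p:ℝ) + r := by
    have h1 : (1:ℝ) ≤ (p:ℝ) := by exact_mod_cast hp
    have h2 : (0:ℝ) ≤ (r:ℝ) := by positivity
    linarith
  have hδ0 : 0 < δ := by rw [hδ]; exact div_pos hε hpr
  have hcoef : ((p:ℝ) + r) / ε = 1 / δ := by rw [hδ, one_div_div]
  haveI : Nonempty (Fin d) := ⟨⟨0, hd⟩⟩
  set Y := lpNorm d p y with hYdef
  have hYsum : Y = (∑ j, y j ^ p) ^ ((1:ℝ)/p) := by
    rw [hYdef, lpNorm]
    congr 1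
    exact Finset.sum_congr rfl fun j _ => by rw [abs_of_nonneg (hy j)]
  have hY0 : 0 ≤ Y := by
    rw [hYsum]
    exact Real.rpow_nonneg (Finset.sum_nonneg fun j _ => pow_nonneg (hy j) p) _
  set D := lpNorm d p (fun _ => (1:ℝ)) with hDdef
  have hDsum : D = (∑ _j : Fin d, (1:ℝ) ^ p) ^ ((1:ℝ)/p) := by
    rw [hDdef, lpNorm]; norm_num
  have hD0 : 0 ≤ D := by
    rw [hDsum]
    exact Real.rpow_nonneg (Finset.sum_nonneg fun j _ => by norm_num) _
  set B := lpNorm d p (fun j => 1 + δ * y j) with hBdef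
  have hptB : ∀ j : Fin d, 0 ≤ 1 + δ * y j := fun j =>
    add_nonneg zero_le_one (mul_nonneg hδ0.le (hy j))
  have hBsum : B = (∑ j, (1 + δ * y j) ^ p) ^ ((1:ℝ)/p) := by
    rw [hBdef, lpNorm]
    congr 1
    exact Finset.sum_congr rfl fun j _ => by rw [abs_of_nonneg (hptB j)]
  have hB0 : 0 ≤ B := by
    rw [hBsum]
    exact Real.rpow_nonneg (Finset.sum_nonneg fun j _ => pow_nonneg (hptB j) p) _
  have hscale : (∑ j, (δ * y j) ^ p) ^ ((1:ℝ)/p) = δ * Y := by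
    rw [hYsum, ← scale_rpow hδ0.le hp0
      (Finset.sum_nonneg fun j (_ : j ∈ Finset.univ) => pow_nonneg (hy j) p)]
    congr 1
    rw [Finset.mul_sum]
    exact Finset.sum_congr rfl fun j _ => mul_pow _ _ _
  set M := mixedNorm d p r x0 y with hMdef
  have hMsum : M = (x0 ^ r + Y ^ r) ^ ((1:ℝ)/r) := by
    rw [hMdef, mixedNorm, abs_of_nonneg hx0]
  have hM0 : 0 ≤ M := by
    rw [hMsum]
    exact Real.rpow_nonneg (add_nonneg (pow_nonneg hx0 r) (pow_nonneg hY0 r)) _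
  have hscaleM : ((δ * x0) ^ r + (δ * Y) ^ r) ^ ((1:ℝ)/r) = δ * M := by
    rw [hMsum, ← scale_rpow hδ0.le hr0 (add_nonneg (pow_nonneg hx0 r) (pow_nonneg hY0 r))]
    congr 1
    ring
  -- lower bound for B
  have hBlow : 1 + δ * Y ≤ B := by
    have h := key_rpow (Finset.univ : Finset (Fin d)) Finset.univ_nonempty hp0
      (fun j => δ * y j) (fun j _ => mul_nonneg hδ0.le (hy j))
    rw [hscale] at h
    rw [hBsum]
    exact h
  have hA0 : (0:ℝ) ≤ 1 + δ * x0 := add_nonneg zero_le_one (mul_nonneg hδ0.le hx0)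
  have h1Y : (0:ℝ) ≤ 1 + δ * Y := add_nonneg zero_le_one (mul_nonneg hδ0.le hY0)
  -- key applied to the pair
  have hpair : 1 + δ * M ≤ ((1 + δ * x0) ^ r + (1 + δ * Y) ^ r) ^ ((1:ℝ)/r) := by
    have h := key_rpow (Finset.univ : Finset (Fin 2)) Finset.univ_nonempty hr0
      (![δ * x0, δ * Y]) (fun i _ => by
        fin_cases i
        · simpa using mul_nonneg hδ0.le hx0
        · simpa using mul_nonneg hδ0.le hY0)
    simp only [Fin.sum_univ_two, Matrix.cons_val_zero, Matrix.cons_val_one,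
      Matrix.head_cons] at h
    rw [hscaleM] at h
    exact h
  set Z := ((1 + δ * x0) ^ r + B ^ r) ^ ((1:ℝ)/r) with hZdef
  have hPsi : PsiMixed d p r δ x0 y = (1/δ) * (Z - 1) := rfl
  have hZlow : 1 + δ * M ≤ Z := by
    refine hpair.trans ?_
    refine Real.rpow_le_rpow (add_nonneg (pow_nonneg hA0 r) (pow_nonneg h1Y r)) ?_
      (by positivity)
    have h : (1 + δ * Y) ^ r ≤ B ^ r := pow_le_pow_left₀ h1Y hBlow r
    linarith
  -- upper bound
  have hmink1 : (∑ j, (1 + δ * y j) ^ p) ^ ((1:ℝ)/p)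
      ≤ (∑ _j : Fin d, (1:ℝ) ^ p) ^ ((1:ℝ)/p) + (∑ j, (δ * y j) ^ p) ^ ((1:ℝ)/p) := by
    have h := Real.Lp_add_le_of_nonneg (s := (Finset.univ : Finset (Fin d)))
      (f := fun _ : Fin d => (1:ℝ)) (g := fun j => δ * y j) (p := (p:ℝ))
      (by exact_mod_cast hp) (fun i _ => zero_le_one) (fun i _ => mul_nonneg hδ0.le (hy i))
    simpa [Real.rpow_natCast] using h
  have hBup : B ≤ D + δ * Y := by
    rw [hBsum, hDsum, ← hscale]
    exact hmink1
  have hmink2 : ((1 + δ * x0) ^ r + (D + δ * Y) ^ r) ^ ((1:ℝ)/r)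
      ≤ ((1:ℝ) ^ r + D ^ r) ^ ((1:ℝ)/r) + ((δ * x0) ^ r + (δ * Y) ^ r) ^ ((1:ℝ)/r) := by
    have h := Real.Lp_add_le_of_nonneg (s := (Finset.univ : Finset (Fin 2)))
      (f := ![1, D]) (g := ![δ * x0, δ * Y]) (p := (r:ℝ))
      (by exact_mod_cast hr)
      (fun i _ => by fin_cases i <;> simp [hD0])
      (fun i _ => by
        fin_cases i
        · simpa using mul_nonneg hδ0.le hx0
        · simpa using mul_nonneg hδ0.le hY0)
    simpa [Fin.sum_univ_two, Real.rpow_natCast] using h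
  have hD1 : ((1:ℝ) ^ r + D ^ r) ^ ((1:ℝ)/r) ≤ 1 + D := by
    have h1 : (1:ℝ) ^ r + D ^ r ≤ (1 + D) ^ r := pow_add_pow_le zero_le_one hD0 hr0
    calc ((1:ℝ) ^ r + D ^ r) ^ ((1:ℝ)/r)
        ≤ ((1 + D) ^ r) ^ ((1:ℝ)/r) :=
          Real.rpow_le_rpow (add_nonneg (by norm_num) (pow_nonneg hD0 r)) h1 (by positivity)
      _ = 1 + D := rpow_pow_nat (by linarith) hr0
  have hZup : Z ≤ 1 + D + δ * M := by
    rw [hZdef]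
    calc ((1 + δ * x0) ^ r + B ^ r) ^ ((1:ℝ)/r)
        ≤ ((1 + δ * x0) ^ r + (D + δ * Y) ^ r) ^ ((1:ℝ)/r) := by
          refine Real.rpow_le_rpow (add_nonneg (pow_nonneg hA0 r) (pow_nonneg hB0 r)) ?_
            (by positivity)
          have h : B ^ r ≤ (D + δ * Y) ^ r := pow_le_pow_left₀ hB0 hBup r
          linarith
      _ ≤ ((1:ℝ) ^ r + D ^ r) ^ ((1:ℝ)/r) + ((δ * x0) ^ r + (δ * Y) ^ r) ^ ((1:ℝ)/r) := hmink2
      _ ≤ 1 + D + δ * M := by rw [hscaleM]; linarith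
  constructor
  · rw [hPsi, one_div, inv_mul_eq_div, le_div_iff₀ hδ0]
    nlinarith [hZlow]
  · rw [hPsi, hcoef]
    have h2 : Z - 1 ≤ δ * M + D := by linarith
    calc 1/δ * (Z - 1) ≤ 1/δ * (δ * M + D) := by
          exact mul_le_mul_of_nonneg_left h2 (by positivity)
      _ = M + 1/δ * D := by field_simp
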